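/- The map σ is Sp(H)-equivariant: for every ψ ∈ Sp(H) and every x ∈ 𝔏₃ ⊗ ℤ/2ℤ one has σ(ψ·x) = ψ·σ(x), where ψ acts on H ⊗ ℤ/2ℤ via its action on H. -/

import Mathlib

open scoped TensorProduct

noncomputable section

/-- The free Lie ring `𝔏` on the `2g` generators. -/
abbrev L (g : ℕ) : Type := FreeLieAlgebra ℤ (Fin (2 * g))

/-- The free abelian group `H` of rank `2g`. -/
abbrev H (g : ℕ) : Type := Fin (2 * g) → ℤ

/-- The canonical inclusion of `H` into `𝔏` as the degree `1` part. -/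
def toL (g : ℕ) : H g →ₗ[ℤ] L g where
  toFun v := ∑ i, v i • FreeLieAlgebra.of ℤ i
  map_add' x y := by simp [add_smul, Finset.sum_add_distrib]
  map_smul' c x := by simp [Finset.smul_sum, smul_smul]

/-- Index of the basis element `aᵢ`. -/
def aIdx (g : ℕ) (i : Fin g) : Fin (2 * g) := ⟨i.1, by have := i.2; omega⟩

/-- Index of the basis element `bᵢ`. -/
def bIdx (g : ℕ) (i : Fin g) : Fin (2 * g) := ⟨g + i.1, by have := i.2; omega⟩

/-- The basis element `aᵢ` of `H`. -/
def aV (g : ℕ) (i : Fin g) : H g := Pi.single (aIdx g i) 1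

/-- The basis element `bᵢ` of `H`. -/
def bV (g : ℕ) (i : Fin g) : H g := Pi.single (bIdx g i) 1

/-- The symplectic pairing `ω : H × H → ℤ`, with `ω(aᵢ,bⱼ) = δᵢⱼ`, `ω(aᵢ,aⱼ) = ω(bᵢ,bⱼ) = 0`. -/
def omegaPair (g : ℕ) (x y : H g) : ℤ :=
  ∑ i : Fin g, (x (aIdx g i) * y (bIdx g i) - x (bIdx g i) * y (aIdx g i))

/-- `IsBrkt g k x` means that `x` is a `k`-fold Lie bracket of elements of `H`. -/
inductive IsBrkt (g : ℕ) : ℕ → L g → Prop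
  | of (v : H g) : IsBrkt g 1 (toL g v)
  | lie {m n : ℕ} {x y : L g} : IsBrkt g m x → IsBrkt g n y → IsBrkt g (m + n) ⁅x, y⁆

/-- `𝔏ₖ`, the degree-`k` homogeneous component of the free Lie ring:
the `ℤ`-span of all `k`-fold Lie brackets of elements of `H`. -/
def homog (g k : ℕ) : Submodule ℤ (L g) := Submodule.span ℤ {x | IsBrkt g k x}

lemma toL_mem (g : ℕ) (v : H g) : toL g v ∈ homog g 1 :=
  Submodule.subset_span (IsBrkt.of v)

lemma lie_mem_homog {g m n : ℕ} {x y : L g} (hx : x ∈ homog g m) (hy : y ∈ homog g n) :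
    ⁅x, y⁆ ∈ homog g (m + n) := by
  induction hx using Submodule.span_induction with
  | mem a ha =>
    induction hy using Submodule.span_induction with
    | mem b hb => exact Submodule.subset_span (ha.lie hb)
    | zero => simp
    | add b c hb hc ihb ihc => rw [lie_add]; exact Submodule.add_mem _ ihb ihc
    | smul t b hb ihb => rw [lie_smul]; exact Submodule.smul_mem _ t ihb
  | zero => simp
  | add a c ha hc iha ihc => rw [add_lie]; exact Submodule.add_mem _ iha ihc
  | smul t a ha iha => rw [smul_lie]; exact Submodule.smul_mem _ t iha

/-- `[[a,b],c]` as an element of `𝔏₃`. -/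
def trip (g : ℕ) (a b c : H g) : ↥(homog g 3) :=
  ⟨⁅⁅toL g a, toL g b⁆, toL g c⁆,
    Submodule.subset_span (((IsBrkt.of a).lie (IsBrkt.of b)).lie (IsBrkt.of c))⟩

/-- The symplectic element `ω = Σᵢ [aᵢ, bᵢ] ∈ 𝔏₂`. -/
def omegaL (g : ℕ) : L g := ∑ i : Fin g, ⁅toL g (aV g i), toL g (bV g i)⁆

lemma omegaL_mem (g : ℕ) : omegaL g ∈ homog g 2 :=
  Submodule.sum_mem _ fun i _ =>
    Submodule.subset_span ((IsBrkt.of (aV g i)).lie (IsBrkt.of (bV g i)))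

/-- The Lie ideal `⟨⟨ω⟩⟩` of `𝔏` generated by `ω`. -/
def omegaIdeal (g : ℕ) : LieIdeal ℤ (L g) := LieSubmodule.lieSpan ℤ (L g) {omegaL g}

end

noncomputable section

/-- The functorial extension to `𝔏` of an endomorphism of `H`. -/
def extL (g : ℕ) (ψ : H g →ₗ[ℤ] H g) : L g →ₗ⁅ℤ⁆ L g :=
  FreeLieAlgebra.lift ℤ fun i => toL g (ψ (Pi.single i 1))

lemma extL_of (g : ℕ) (ψ : H g →ₗ[ℤ] H g) (i : Fin (2 * g)) :
    extL g ψ (FreeLieAlgebra.of ℤ i) = toL g (ψ (Pi.single i 1)) :=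
  FreeLieAlgebra.lift_of_apply _ _

lemma pi_decomp {g : ℕ} (v : H g) : v = ∑ i, v i • (Pi.single i 1 : H g) := by
  funext j
  simp [Pi.single_apply]

lemma extL_toL (g : ℕ) (ψ : H g →ₗ[ℤ] H g) (v : H g) :
    extL g ψ (toL g v) = toL g (ψ v) := by
  have lhs : extL g ψ (toL g v) = ∑ i, v i • toL g (ψ (Pi.single i 1)) := by
    rw [show toL g v = ∑ i, v i • FreeLieAlgebra.of ℤ i from rfl,
      ← LieHom.coe_toLinearMap, map_sum]
    simp [extL_of]
  have rhs : toL g (ψ v) = ∑ i, v i • toL g (ψ (Pi.single i 1)) := by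
    conv_lhs => rw [pi_decomp v]
    rw [map_sum, map_sum]
    exact Finset.sum_congr rfl fun i _ => by rw [map_smul, map_smul]
  rw [lhs, rhs]

lemma extL_mem {g : ℕ} (ψ : H g →ₗ[ℤ] H g) {k : ℕ} {x : L g} (hx : x ∈ homog g k) :
    extL g ψ x ∈ homog g k := by
  induction hx using Submodule.span_induction with
  | mem a ha =>
    refine Submodule.subset_span ?_
    induction ha with
    | of v => rw [extL_toL]; exact IsBrkt.of (ψ v)
    | lie hx hy ihx ihy => rw [LieHom.map_lie]; exact ihx.lie ihy
  | zero => simp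
  | add a c _ _ iha ihc => rw [map_add]; exact Submodule.add_mem _ iha ihc
  | smul t a _ iha => rw [map_smul]; exact Submodule.smul_mem _ t iha

/-- The action on `𝔏₃` induced by an endomorphism of `H`. -/
def extL3 (g : ℕ) (ψ : H g →ₗ[ℤ] H g) : ↥(homog g 3) →ₗ[ℤ] ↥(homog g 3) :=
  LinearMap.restrict (extL g ψ).toLinearMap (fun _ hx => extL_mem ψ hx)


lemma isBrkt_pos {g k : ℕ} {x : L g} (h : IsBrkt g k x) : 1 ≤ k := by
  induction h with
  | of => exact le_refl 1
  | lie _ _ ih1 ih2 => omega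

lemma isBrkt_one' {g k : ℕ} {x : L g} (h : IsBrkt g k x) (hk : k = 1) :
    ∃ v, x = toL g v := by
  cases h with
  | of v => exact ⟨v, rfl⟩
  | @lie m n _ _ h1 h2 =>
    exfalso
    have := isBrkt_pos h1
    have := isBrkt_pos h2
    omega

lemma isBrkt_one {g : ℕ} {x : L g} (h : IsBrkt g 1 x) : ∃ v, x = toL g v :=
  isBrkt_one' h rfl

lemma isBrkt_two' {g k : ℕ} {x : L g} (h : IsBrkt g k x) (hk : k = 2) :
    ∃ u v, x = ⁅toL g u, toL g v⁆ := by
  cases h with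
  | of v => exact absurd hk (by omega)
  | @lie m n y z h1 h2 =>
    have hm := isBrkt_pos h1
    have hn := isBrkt_pos h2
    have hm1 : m = 1 := by omega
    have hn1 : n = 1 := by omega
    subst hm1; subst hn1
    obtain ⟨u, rfl⟩ := isBrkt_one h1
    obtain ⟨v, rfl⟩ := isBrkt_one h2
    exact ⟨u, v, rfl⟩

lemma isBrkt_two {g : ℕ} {x : L g} (h : IsBrkt g 2 x) :
    ∃ u v, x = ⁅toL g u, toL g v⁆ :=
  isBrkt_two' h rfl

lemma isBrkt_three' {g k : ℕ} {x : L g} (h : IsBrkt g k x) (hk : k = 3) :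
    (∃ a b c, x = ⁅⁅toL g a, toL g b⁆, toL g c⁆) ∨
    (∃ a b c, x = ⁅toL g a, ⁅toL g b, toL g c⁆⁆) := by
  cases h with
  | of v => exact absurd hk (by omega)
  | @lie m n y z h1 h2 =>
    have hm := isBrkt_pos h1
    have hn := isBrkt_pos h2
    have hcase : (m = 1 ∧ n = 2) ∨ (m = 2 ∧ n = 1) := by omega
    rcases hcase with ⟨hm1, hn1⟩ | ⟨hm1, hn1⟩
    · subst hm1; subst hn1
      obtain ⟨a, rfl⟩ := isBrkt_one h1
      obtain ⟨b, c, rfl⟩ := isBrkt_two h2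
      exact Or.inr ⟨a, b, c, rfl⟩
    · subst hm1; subst hn1
      obtain ⟨a, b, rfl⟩ := isBrkt_two h1
      obtain ⟨c, rfl⟩ := isBrkt_one h2
      exact Or.inl ⟨a, b, c, rfl⟩

lemma isBrkt_three {g : ℕ} {x : L g} (h : IsBrkt g 3 x) :
    (∃ a b c, x = ⁅⁅toL g a, toL g b⁆, toL g c⁆) ∨
    (∃ a b c, x = ⁅toL g a, ⁅toL g b, toL g c⁆⁆) :=
  isBrkt_three' h rfl

lemma extL3_trip (g : ℕ) (ψ : H g →ₗ[ℤ] H g) (a b c : H g) :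
    extL3 g ψ (trip g a b c) = trip g (ψ a) (ψ b) (ψ c) := by
  apply Subtype.ext
  show (extL g ψ).toLinearMap ⁅⁅toL g a, toL g b⁆, toL g c⁆ = _
  rw [LieHom.coe_toLinearMap, LieHom.map_lie, LieHom.map_lie, extL_toL, extL_toL, extL_toL]
  rfl

lemma stmt3_key (g : ℕ)
    (σ : (↥(homog g 3) ⊗[ℤ] ZMod 2) →ₗ[ℤ] (H g ⊗[ℤ] ZMod 2))
    (hσ : ∀ a b c : H g,
      σ (trip g a b c ⊗ₜ (1 : ZMod 2)) =
        omegaPair g b c • (a ⊗ₜ (1 : ZMod 2)) + omegaPair g a c • (b ⊗ₜ (1 : ZMod 2)))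
    (ψ : H g ≃ₗ[ℤ] H g)
    (hψ : ∀ x y : H g, omegaPair g (ψ x) (ψ y) = omegaPair g x y)
    (a b c : H g) :
    σ (LinearMap.rTensor (ZMod 2) (extL3 g ψ.toLinearMap) (trip g a b c ⊗ₜ (1 : ZMod 2))) =
      LinearMap.rTensor (ZMod 2) ψ.toLinearMap (σ (trip g a b c ⊗ₜ (1 : ZMod 2))) := by
  rw [LinearMap.rTensor_tmul, extL3_trip, hσ, hσ]
  simp only [LinearEquiv.coe_coe]
  rw [hψ, hψ, map_add, map_smul, map_smul, LinearMap.rTensor_tmul, LinearMap.rTensor_tmul]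
  simp

lemma stmt3_aux (g : ℕ)
    (σ : (↥(homog g 3) ⊗[ℤ] ZMod 2) →ₗ[ℤ] (H g ⊗[ℤ] ZMod 2))
    (hσ : ∀ a b c : H g,
      σ (trip g a b c ⊗ₜ (1 : ZMod 2)) =
        omegaPair g b c • (a ⊗ₜ (1 : ZMod 2)) + omegaPair g a c • (b ⊗ₜ (1 : ZMod 2)))
    (ψ : H g ≃ₗ[ℤ] H g)
    (hψ : ∀ x y : H g, omegaPair g (ψ x) (ψ y) = omegaPair g x y)
    (s : ↥(homog g 3)) :
    σ (LinearMap.rTensor (ZMod 2) (extL3 g ψ.toLinearMap) (s ⊗ₜ (1 : ZMod 2))) =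
      LinearMap.rTensor (ZMod 2) ψ.toLinearMap (σ (s ⊗ₜ (1 : ZMod 2))) := by
  obtain ⟨s, hs⟩ := s
  induction hs using Submodule.span_induction with
  | mem x hx =>
    rcases isBrkt_three hx with ⟨a, b, c, rfl⟩ | ⟨a, b, c, rfl⟩
    · exact stmt3_key g σ hσ ψ hψ a b c
    · have heq : ∀ h : ⁅toL g a, ⁅toL g b, toL g c⁆⁆ ∈ Submodule.span ℤ {x | IsBrkt g 3 x},
          (⟨⁅toL g a, ⁅toL g b, toL g c⁆⁆, h⟩ : ↥(homog g 3)) = -(trip g b c a) := by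
        intro h
        apply Subtype.ext
        show ⁅toL g a, ⁅toL g b, toL g c⁆⁆ = -⁅⁅toL g b, toL g c⁆, toL g a⁆
        rw [lie_skew]
      rw [heq _, TensorProduct.neg_tmul, map_neg, map_neg, map_neg, map_neg,
        stmt3_key g σ hσ ψ hψ b c a]
  | zero =>
    have : ∀ h : (0 : L g) ∈ Submodule.span ℤ {x | IsBrkt g 3 x}, (⟨0, h⟩ : ↥(homog g 3)) = 0 := fun _ => rfl
    rw [this _, TensorProduct.zero_tmul]
    simp
  | add x y hx hy ihx ihy =>
    have : ∀ h : x + y ∈ Submodule.span ℤ {x | IsBrkt g 3 x}, (⟨x + y, h⟩ : ↥(homog g 3))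
        = ⟨x, hx⟩ + ⟨y, hy⟩ := fun _ => rfl
    rw [this _, TensorProduct.add_tmul, map_add, map_add, map_add, map_add, ihx, ihy]
  | smul t x hx ih =>
    have : ∀ h : t • x ∈ Submodule.span ℤ {x | IsBrkt g 3 x}, (⟨t • x, h⟩ : ↥(homog g 3))
        = t • (⟨x, hx⟩ : ↥(homog g 3)) := fun _ => rfl
    rw [this _, ← TensorProduct.smul_tmul', map_smul, map_smul, map_smul, map_smul, ih]

/-- `σ` is `Sp(H)`-equivariant. -/
theorem stmt3 (g : ℕ) (hg : 1 ≤ g)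
    (σ : (↥(homog g 3) ⊗[ℤ] ZMod 2) →ₗ[ℤ] (H g ⊗[ℤ] ZMod 2))
    (hσ : ∀ a b c : H g,
      σ (trip g a b c ⊗ₜ (1 : ZMod 2)) =
        omegaPair g b c • (a ⊗ₜ (1 : ZMod 2)) + omegaPair g a c • (b ⊗ₜ (1 : ZMod 2)))
    (ψ : H g ≃ₗ[ℤ] H g)
    (hψ : ∀ x y : H g, omegaPair g (ψ x) (ψ y) = omegaPair g x y) :
    ∀ x : ↥(homog g 3) ⊗[ℤ] ZMod 2,
      σ (LinearMap.rTensor (ZMod 2) (extL3 g ψ.toLinearMap) x) =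
        LinearMap.rTensor (ZMod 2) ψ.toLinearMap (σ x) := by
  intro x
  have hx : x ∈ (⊤ : Submodule ℤ (↥(homog g 3) ⊗[ℤ] ZMod 2)) := trivial
  replace hx : x ∈ Submodule.span ℤ {t : ↥(homog g 3) ⊗[ℤ] ZMod 2 | ∃ m n, m ⊗ₜ n = t} := by
    exact (TensorProduct.span_tmul_eq_top (R := ℤ) (M := ↥(homog g 3)) (N := ZMod 2)).ge hx
  induction hx using Submodule.span_induction with
  | mem z hz =>
    obtain ⟨s, t, rfl⟩ := hz
    have ht : t = ((t.val : ℤ) • (1 : ZMod 2)) := by revert t; decide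
    rw [ht, TensorProduct.tmul_smul, map_smul, map_smul, map_smul,
      stmt3_aux g σ hσ ψ hψ s, map_smul]
  | zero => simp
  | add u v _ _ ihu ihv => rw [map_add, map_add, map_add, ihu, ihv, map_add]
  | smul t u _ ihu => rw [map_smul, map_smul, map_smul, ihu, map_smul]

end
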